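/- Let p, ε ∈ [0,1], let A be a random N×N matrix over 𝔽₂ whose entries are independent and each equals 1 with probability p, let G = [I | A] be the N×(2N) matrix whose first N columns form the identity and whose last N columns are the columns of A, and let S ⊆ {1,…,2N} be a random erasure pattern, independent of A, with each coordinate included independently with probability ε. Then for every fixed x₀ ∈ 𝔽₂^N with exactly k nonzero coordinates (k ≥ 1), the probability over A and S jointly that x₀ is confused with the zero vector under S equals ε^k · (ε + (1−ε)·(1+(1−2p)^k)/2)^N. -/

import Mathlib

open scoped Classical

/-- `x₁` is *confused with* `x₂` under the erasure pattern `S`: the codewords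
`x₁ᵀG` and `x₂ᵀG` agree on every coordinate outside `S`. -/
def Confused {n m : Type*} [Fintype n] (G : Matrix n m (ZMod 2))
    (x₁ x₂ : n → ZMod 2) (S : Finset m) : Prop :=
  ∀ j, j ∉ S → Matrix.vecMul x₁ G j = Matrix.vecMul x₂ G j

/-- Joint probability of an event `E` depending on a random `N×N` matrix `A`
over `𝔽₂` with i.i.d. Bernoulli(p) entries and an independent random erasure
pattern `S ⊆ Fin N ⊕ Fin N` with each coordinate erased with probability `ε`. -/
noncomputable def jointProb (N : ℕ) (p ε : ℝ)
    (E : Matrix (Fin N) (Fin N) (ZMod 2) → Finset (Fin N ⊕ Fin N) → Prop) : ℝ :=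
  ∑ A : Matrix (Fin N) (Fin N) (ZMod 2), ∑ S : Finset (Fin N ⊕ Fin N),
    if E A S then
      (∏ i, ∏ j, if A i j = 1 then p else 1 - p) *
        (ε ^ S.card * (1 - ε) ^ (2 * N - S.card))
    else 0



namespace Stmt7Aux

noncomputable def wA (p : ℝ) (a : ZMod 2) : ℝ := if a = 1 then p else 1 - p
noncomputable def wS (ε : ℝ) (b : Bool) : ℝ := if b then ε else 1 - ε
noncomputable def chi (z : ZMod 2) : ℝ := if z = 1 then -1 else 1

lemma zmod2_cases (a : ZMod 2) : a = 0 ∨ a = 1 := by revert a; decide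

lemma univ_zmod2 : (Finset.univ : Finset (ZMod 2)) = {0, 1} := by decide

lemma sum_zmod2 (g : ZMod 2 → ℝ) : ∑ a, g a = g 0 + g 1 := by
  rw [univ_zmod2, Finset.sum_insert (by decide), Finset.sum_singleton]

lemma chi_zero : chi 0 = 1 := by simp [chi]

lemma chi_add (a b : ZMod 2) : chi (a + b) = chi a * chi b := by
  rcases zmod2_cases a with h | h <;> rcases zmod2_cases b with h' | h' <;>
    subst h <;> subst h' <;> simp [chi] <;> norm_num

lemma chi_sum {ι : Type*} (s : Finset ι) (v : ι → ZMod 2) :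
    chi (∑ i ∈ s, v i) = ∏ i ∈ s, chi (v i) := by
  induction s using Finset.cons_induction with
  | empty => simp [chi_zero]
  | cons a s ha ih => rw [Finset.sum_cons, Finset.prod_cons, chi_add, ih]

lemma indicator_eq (z : ZMod 2) : (if z = 0 then (1 : ℝ) else 0) = (1 + chi z) / 2 := by
  rcases zmod2_cases z with h | h <;> subst h <;> simp [chi] <;> norm_num

lemma sum_wA (p : ℝ) : ∑ a : ZMod 2, wA p a = 1 := by
  rw [sum_zmod2]; simp [wA]

lemma sum_chi_wA (p : ℝ) : ∑ a : ZMod 2, chi a * wA p a = 1 - 2 * p := by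
  rw [sum_zmod2]; simp [wA, chi]; ring


lemma sum_pi_prod {ι κ : Type*} [Fintype ι] [DecidableEq ι] [Fintype κ]
    (F : ι → κ → ℝ) : ∑ c : ι → κ, ∏ i, F i (c i) = ∏ i, ∑ a, F i a := by
  rw [Finset.prod_univ_sum, Fintype.piFinset_univ]

lemma sum_prod_wA {N : ℕ} (p : ℝ) : ∑ c : Fin N → ZMod 2, ∏ i, wA p (c i) = 1 := by
  rw [sum_pi_prod]; simp [sum_wA]

lemma prod_ite_card {ι : Type*} [Fintype ι] (P : ι → Prop) [DecidablePred P] (u : ℝ) :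
    (∏ i, if P i then u else 1) = u ^ (Finset.univ.filter P).card := by
  rw [Finset.prod_ite, Finset.prod_const, Finset.prod_const, one_pow, mul_one]

lemma sum_parity {N : ℕ} (p : ℝ) (x₀ : Fin N → ZMod 2) (k : ℕ)
    (hcard : (Finset.univ.filter (fun i => x₀ i ≠ 0)).card = k) :
    ∑ c : Fin N → ZMod 2,
        (if (∑ i, x₀ i * c i) = 0 then (1 : ℝ) else 0) * ∏ i, wA p (c i)
      = (1 + (1 - 2 * p) ^ k) / 2 := by
  have h1 : ∀ c : Fin N → ZMod 2,
      (if (∑ i, x₀ i * c i) = 0 then (1 : ℝ) else 0) * ∏ i, wA p (c i)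
      = ((∏ i, wA p (c i)) + ∏ i, (chi (x₀ i * c i) * wA p (c i))) / 2 := by
    intro c
    rw [indicator_eq, chi_sum, Finset.prod_mul_distrib]
    ring
  simp_rw [h1]
  rw [← Finset.sum_div, Finset.sum_add_distrib, sum_prod_wA, sum_pi_prod (fun i a => chi (x₀ i * a) * wA p a)]
  have h2 : ∀ i, (∑ a : ZMod 2, chi (x₀ i * a) * wA p a)
      = if x₀ i ≠ 0 then 1 - 2 * p else 1 := by
    intro i
    rcases zmod2_cases (x₀ i) with h | h <;> rw [h] <;> simp [chi_zero, sum_chi_wA, sum_wA, h]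
  simp_rw [h2]
  rw [prod_ite_card (fun i => x₀ i ≠ 0) (1 - 2*p), hcard]

lemma site1 (ε : ℝ) (z : ZMod 2) :
    ∑ b : Bool, (if (b = true ∨ z = 0) then (1 : ℝ) else 0) * wS ε b
      = if z ≠ 0 then ε else 1 := by
  rw [Fintype.sum_bool]
  by_cases h : z = 0 <;> simp [h, wS] <;> ring

lemma site2 {N : ℕ} (p ε : ℝ) (x₀ : Fin N → ZMod 2) (k : ℕ)
    (hcard : (Finset.univ.filter (fun i => x₀ i ≠ 0)).card = k) :
    ∑ c : Fin N → ZMod 2, ∑ b : Bool,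
        (if (b = true ∨ (∑ i, x₀ i * c i) = 0) then (1 : ℝ) else 0) * wS ε b
          * ∏ i, wA p (c i)
      = ε + (1 - ε) * ((1 + (1 - 2 * p) ^ k) / 2) := by
  have h1 : ∀ c : Fin N → ZMod 2,
      (∑ b : Bool, (if (b = true ∨ (∑ i, x₀ i * c i) = 0) then (1 : ℝ) else 0) * wS ε b
        * ∏ i, wA p (c i))
      = ε * ∏ i, wA p (c i)
        + (1 - ε) * ((if (∑ i, x₀ i * c i) = 0 then (1 : ℝ) else 0) * ∏ i, wA p (c i)) := by
    intro c
    rw [Fintype.sum_bool]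
    by_cases h : (∑ i, x₀ i * c i) = 0 <;> simp [h, wS] <;> ring
  simp_rw [h1]
  rw [Finset.sum_add_distrib, ← Finset.mul_sum, ← Finset.mul_sum, sum_prod_wA,
    sum_parity p x₀ k hcard, mul_one]

lemma prod_wS {α : Type*} [Fintype α] (ε : ℝ) (f : α → Bool) :
    ∏ c, wS ε (f c)
      = ε ^ (Finset.univ.filter (fun c => f c = true)).card
        * (1 - ε) ^ (Fintype.card α - (Finset.univ.filter (fun c => f c = true)).card) := by
  have hsplit := Finset.card_filter_add_card_filter_not
    (s := (Finset.univ : Finset α)) (p := fun c => f c = true)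
  unfold wS
  rw [Finset.prod_ite, Finset.prod_const, Finset.prod_const]
  congr 1
  rw [Finset.card_univ] at hsplit
  congr 1
  omega

def boolEquiv (α : Type*) [Fintype α] [DecidableEq α] : (α → Bool) ≃ Finset α where
  toFun f := Finset.univ.filter (fun c => f c = true)
  invFun S c := decide (c ∈ S)
  left_inv f := by funext c; simp
  right_inv S := by ext c; simp

lemma mem_boolEquiv {α : Type*} [Fintype α] [DecidableEq α] (f : α → Bool) (c : α) :
    c ∈ boolEquiv α f ↔ f c = true := by simp [boolEquiv]

lemma card_boolEquiv {α : Type*} [Fintype α] [DecidableEq α] (f : α → Bool) :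
    (boolEquiv α f).card = (Finset.univ.filter (fun c => f c = true)).card := rfl

def transposeEquivFun (N : ℕ) : (Fin N → Fin N → ZMod 2) ≃ Matrix (Fin N) (Fin N) (ZMod 2) where
  toFun B := fun i j => B j i
  invFun A := fun j i => A i j
  left_inv B := rfl
  right_inv A := rfl
end Stmt7Aux


open Stmt7Aux

/-- **Exact ambiguity probability of the GC-3 code (Lemma 7).**
For the systematic generator matrix `[I | A]` with `A` a random Erdős–Rényi
adjacency matrix and an independent BEC(ε) erasure pattern, the probability
that a fixed `x₀` of Hamming weight `k ≥ 1` is confused with the zero vector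
equals `ε^k (ε + (1−ε)(1+(1−2p)^k)/2)^N`. -/
theorem stmt7 (N : ℕ) (p ε : ℝ) (hp0 : 0 ≤ p) (hp1 : p ≤ 1)
    (hε0 : 0 ≤ ε) (hε1 : ε ≤ 1) (x₀ : Fin N → ZMod 2) (k : ℕ) (hk : 1 ≤ k)
    (hcard : (Finset.univ.filter (fun i => x₀ i ≠ 0)).card = k) :
    jointProb N p ε (fun A S => Confused (Matrix.fromCols 1 A) x₀ 0 S)
      = ε ^ k * (ε + (1 - ε) * ((1 + (1 - 2 * p) ^ k) / 2)) ^ N := by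
  unfold jointProb
  -- Step 1: the confusion event, coordinatewise
  have hconfEq : ∀ (A : Matrix (Fin N) (Fin N) (ZMod 2)) (f : (Fin N ⊕ Fin N) → Bool),
      Confused (Matrix.fromCols 1 A) x₀ 0 (boolEquiv _ f) ↔
        ((∀ i, f (Sum.inl i) = true ∨ x₀ i = 0) ∧
         (∀ j, f (Sum.inr j) = true ∨ (∑ i, x₀ i * A i j) = 0)) := by
    intro A f
    have hv : Matrix.vecMul x₀ (Matrix.fromCols 1 A)
        = Sum.elim x₀ (fun j => ∑ i, x₀ i * A i j) := by
      rw [Matrix.vecMul_fromCols, Matrix.vecMul_one]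
      rfl
    have h0 : Matrix.vecMul (0 : Fin N → ZMod 2)
        (Matrix.fromCols (1 : Matrix (Fin N) (Fin N) (ZMod 2)) A) = 0 :=
      Matrix.zero_vecMul _
    unfold Confused
    rw [hv, h0]
    simp only [Pi.zero_apply, Sum.forall, Sum.elim_inl, Sum.elim_inr, mem_boolEquiv]
    constructor
    · rintro ⟨h₁, h₂⟩
      exact ⟨fun i => or_iff_not_imp_left.2 (h₁ i), fun j => or_iff_not_imp_left.2 (h₂ j)⟩
    · rintro ⟨h₁, h₂⟩
      exact ⟨fun i => or_iff_not_imp_left.1 (h₁ i), fun j => or_iff_not_imp_left.1 (h₂ j)⟩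
  have h2N : Fintype.card (Fin N ⊕ Fin N) = 2 * N := by simp [two_mul]
  -- Step 2: replace the sum over erasure sets by a sum over Boolean functions
  have hsum1 : ∀ A : Matrix (Fin N) (Fin N) (ZMod 2),
      (∑ S : Finset (Fin N ⊕ Fin N),
          if Confused (Matrix.fromCols 1 A) x₀ 0 S then
            (∏ i, ∏ j, if A i j = 1 then p else 1 - p) *
              (ε ^ S.card * (1 - ε) ^ (2 * N - S.card))
          else 0)
      = ∑ f : (Fin N ⊕ Fin N) → Bool,
          ((∏ i, (if (f (Sum.inl i) = true ∨ x₀ i = 0) then (1 : ℝ) else 0)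
              * wS ε (f (Sum.inl i))) *
           (∏ j, (if (f (Sum.inr j) = true ∨ (∑ i, x₀ i * A i j) = 0) then (1 : ℝ) else 0)
              * wS ε (f (Sum.inr j)) * ∏ i, wA p (A i j))) := by
    intro A
    rw [← Equiv.sum_comp (boolEquiv (Fin N ⊕ Fin N))
      (fun S => if Confused (Matrix.fromCols (1 : Matrix (Fin N) (Fin N) (ZMod 2)) A) x₀ 0 S then
            (∏ i, ∏ j, if A i j = 1 then p else 1 - p) *
              (ε ^ S.card * (1 - ε) ^ (2 * N - S.card)) else 0)]
    refine Finset.sum_congr rfl fun f _ => ?_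
    have hw : ε ^ (boolEquiv (Fin N ⊕ Fin N) f).card
        * (1 - ε) ^ (2 * N - (boolEquiv (Fin N ⊕ Fin N) f).card)
        = (∏ i, wS ε (f (Sum.inl i))) * (∏ j, wS ε (f (Sum.inr j))) := by
      rw [← Fintype.prod_sum_type (f := fun c => wS ε (f c)), prod_wS, h2N, ← card_boolEquiv]
    rw [if_congr (hconfEq A f) rfl rfl]
    by_cases hP : ∀ i, f (Sum.inl i) = true ∨ x₀ i = 0
    · by_cases hQ : ∀ j, f (Sum.inr j) = true ∨ (∑ i, x₀ i * A i j) = 0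
      · rw [if_pos ⟨hP, hQ⟩, hw]
        have e1 : (∏ i, (if (f (Sum.inl i) = true ∨ x₀ i = 0) then (1 : ℝ) else 0)
              * wS ε (f (Sum.inl i))) = ∏ i, wS ε (f (Sum.inl i)) :=
          Finset.prod_congr rfl fun i _ => by rw [if_pos (hP i), one_mul]
        have e2 : (∏ j, (if (f (Sum.inr j) = true ∨ (∑ i, x₀ i * A i j) = 0) then (1 : ℝ) else 0)
              * wS ε (f (Sum.inr j)) * ∏ i, wA p (A i j))
            = ∏ j, wS ε (f (Sum.inr j)) * ∏ i, wA p (A i j) :=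
          Finset.prod_congr rfl fun j _ => by rw [if_pos (hQ j), one_mul]
        rw [e1, e2, Finset.prod_mul_distrib,
          Finset.prod_comm (f := fun i j => if A i j = 1 then p else 1 - p)]
        simp only [wA]
        ring
      · rw [if_neg (fun h => hQ h.2)]
        obtain ⟨j, hj⟩ := not_forall.1 hQ
        have hz : (∏ j, (if (f (Sum.inr j) = true ∨ (∑ i, x₀ i * A i j) = 0) then (1 : ℝ) else 0)
              * wS ε (f (Sum.inr j)) * ∏ i, wA p (A i j)) = 0 :=
          Finset.prod_eq_zero (Finset.mem_univ j) (by rw [if_neg hj, zero_mul, zero_mul])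
        rw [hz, mul_zero]
    · rw [if_neg (fun h => hP h.1)]
      obtain ⟨i, hi⟩ := not_forall.1 hP
      have hz : (∏ i, (if (f (Sum.inl i) = true ∨ x₀ i = 0) then (1 : ℝ) else 0)
            * wS ε (f (Sum.inl i))) = 0 :=
        Finset.prod_eq_zero (Finset.mem_univ i) (by rw [if_neg hi, zero_mul])
      rw [hz, zero_mul]
  -- Step 3: split the Boolean function into its two halves
  have hsplitf : ∀ A : Matrix (Fin N) (Fin N) (ZMod 2),
      (∑ f : (Fin N ⊕ Fin N) → Bool,
          ((∏ i, (if (f (Sum.inl i) = true ∨ x₀ i = 0) then (1 : ℝ) else 0)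
              * wS ε (f (Sum.inl i))) *
           (∏ j, (if (f (Sum.inr j) = true ∨ (∑ i, x₀ i * A i j) = 0) then (1 : ℝ) else 0)
              * wS ε (f (Sum.inr j)) * ∏ i, wA p (A i j))))
      = (∑ g : Fin N → Bool,
            ∏ i, (if (g i = true ∨ x₀ i = 0) then (1 : ℝ) else 0) * wS ε (g i)) *
        (∑ h : Fin N → Bool,
            ∏ j, (if (h j = true ∨ (∑ i, x₀ i * A i j) = 0) then (1 : ℝ) else 0)
              * wS ε (h j) * ∏ i, wA p (A i j)) := by
    intro A
    calc (∑ f : (Fin N ⊕ Fin N) → Bool,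
          ((∏ i, (if (f (Sum.inl i) = true ∨ x₀ i = 0) then (1 : ℝ) else 0)
              * wS ε (f (Sum.inl i))) *
           (∏ j, (if (f (Sum.inr j) = true ∨ (∑ i, x₀ i * A i j) = 0) then (1 : ℝ) else 0)
              * wS ε (f (Sum.inr j)) * ∏ i, wA p (A i j))))
        = ∑ q : (Fin N → Bool) × (Fin N → Bool),
            ((∏ i, (if (q.1 i = true ∨ x₀ i = 0) then (1 : ℝ) else 0) * wS ε (q.1 i)) *
             (∏ j, (if (q.2 j = true ∨ (∑ i, x₀ i * A i j) = 0) then (1 : ℝ) else 0)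
                * wS ε (q.2 j) * ∏ i, wA p (A i j))) := by
          exact (Equiv.sum_comp (Equiv.sumArrowEquivProdArrow (Fin N) (Fin N) Bool).symm
            (fun f : (Fin N ⊕ Fin N) → Bool =>
              ((∏ i, (if (f (Sum.inl i) = true ∨ x₀ i = 0) then (1 : ℝ) else 0)
                  * wS ε (f (Sum.inl i))) *
               (∏ j, (if (f (Sum.inr j) = true ∨ (∑ i, x₀ i * A i j) = 0) then (1 : ℝ) else 0)
                  * wS ε (f (Sum.inr j)) * ∏ i, wA p (A i j))))).symm
      _ = _ := by
          rw [Fintype.sum_prod_type, Finset.sum_mul_sum]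
  calc
    (∑ A : Matrix (Fin N) (Fin N) (ZMod 2), ∑ S : Finset (Fin N ⊕ Fin N),
        if Confused (Matrix.fromCols 1 A) x₀ 0 S then
          (∏ i, ∏ j, if A i j = 1 then p else 1 - p) *
            (ε ^ S.card * (1 - ε) ^ (2 * N - S.card))
        else 0)
      = ∑ A : Matrix (Fin N) (Fin N) (ZMod 2),
          (∑ g : Fin N → Bool,
              ∏ i, (if (g i = true ∨ x₀ i = 0) then (1 : ℝ) else 0) * wS ε (g i)) *
          (∑ h : Fin N → Bool,
              ∏ j, (if (h j = true ∨ (∑ i, x₀ i * A i j) = 0) then (1 : ℝ) else 0)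
                * wS ε (h j) * ∏ i, wA p (A i j)) :=
        Finset.sum_congr rfl fun A _ => (hsum1 A).trans (hsplitf A)
    _ = (∑ g : Fin N → Bool,
            ∏ i, (if (g i = true ∨ x₀ i = 0) then (1 : ℝ) else 0) * wS ε (g i)) *
        ∑ A : Matrix (Fin N) (Fin N) (ZMod 2),
          (∑ h : Fin N → Bool,
              ∏ j, (if (h j = true ∨ (∑ i, x₀ i * A i j) = 0) then (1 : ℝ) else 0)
                * wS ε (h j) * ∏ i, wA p (A i j)) := by
        rw [Finset.mul_sum]
    _ = ε ^ k * (ε + (1 - ε) * ((1 + (1 - 2 * p) ^ k) / 2)) ^ N := by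
        congr 1
        · -- systematic part
          rw [sum_pi_prod (F := fun i b =>
            (if (b = true ∨ x₀ i = 0) then (1 : ℝ) else 0) * wS ε b)]
          simp_rw [site1]
          rw [prod_ite_card (fun i => x₀ i ≠ 0) ε, hcard]
        · -- parity part
          have hA : ∀ A : Matrix (Fin N) (Fin N) (ZMod 2),
              (∑ h : Fin N → Bool,
                ∏ j, (if (h j = true ∨ (∑ i, x₀ i * A i j) = 0) then (1 : ℝ) else 0)
                  * wS ε (h j) * ∏ i, wA p (A i j))
              = ∏ j, ∑ b : Bool,
                  (if (b = true ∨ (∑ i, x₀ i * A i j) = 0) then (1 : ℝ) else 0)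
                    * wS ε b * ∏ i, wA p (A i j) :=
            fun A => sum_pi_prod (F := fun j b =>
              (if (b = true ∨ (∑ i, x₀ i * A i j) = 0) then (1 : ℝ) else 0)
                * wS ε b * ∏ i, wA p (A i j))
          simp_rw [hA]
          rw [← Equiv.sum_comp (transposeEquivFun N)
            (fun A : Matrix (Fin N) (Fin N) (ZMod 2) => ∏ j, ∑ b : Bool,
              (if (b = true ∨ (∑ i, x₀ i * A i j) = 0) then (1 : ℝ) else 0)
                * wS ε b * ∏ i, wA p (A i j))]
          show (∑ B : Fin N → Fin N → ZMod 2, ∏ j, ∑ b : Bool,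
              (if (b = true ∨ (∑ i, x₀ i * B j i) = 0) then (1 : ℝ) else 0)
                * wS ε b * ∏ i, wA p (B j i)) = _
          rw [sum_pi_prod (F := fun (j : Fin N) (c : Fin N → ZMod 2) => ∑ b : Bool,
              (if (b = true ∨ (∑ i, x₀ i * c i) = 0) then (1 : ℝ) else 0)
                * wS ε b * ∏ i, wA p (c i))]
          have : ∀ j : Fin N, (∑ c : Fin N → ZMod 2, ∑ b : Bool,
              (if (b = true ∨ (∑ i, x₀ i * c i) = 0) then (1 : ℝ) else 0)
                * wS ε b * ∏ i, wA p (c i))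
              = ε + (1 - ε) * ((1 + (1 - 2 * p) ^ k) / 2) :=
            fun _ => site2 p ε x₀ k hcard
          rw [Finset.prod_congr rfl fun j _ => this j, Finset.prod_const,
            Finset.card_univ, Fintype.card_fin]
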